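/- Every 3-dimensional left ideal of Λ contains soc Λ; that is, every left ideal U of Λ with dim_k U = 3 contains the elements yx and zx. -/

import Mathlib

open CategoryTheory Limits Opposite

/-- The algebra `Λ = Λ(q)` of Ringel–Zhang: a `k`-algebra with distinguished elements
`x, y, z` satisfying the defining relations
`x² = y² = z² = 0`, `yz = 0`, `xy + q·yx = 0`, `xz = zx`, `zy = zx`,
and admitting the `k`-basis `{1, x, y, z, yx, zx}`.
Any such algebra is canonically isomorphic to the quotient of the free algebra
`k⟨x,y,z⟩` by the two-sided ideal generated by these relations. -/
structure LambdaAlg (k : Type) [Field k] (q : k) (Λ : Type) [Ring Λ] [Algebra k Λ] :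
    Type where
  x : Λ
  y : Λ
  z : Λ
  hxx : x * x = 0
  hyy : y * y = 0
  hzz : z * z = 0
  hyz : y * z = 0
  hxy : x * y + q • (y * x) = 0
  hxz : x * z - z * x = 0
  hzy : z * y - z * x = 0
  basis : Module.Basis (Fin 6) k Λ
  hb0 : basis 0 = 1
  hb1 : basis 1 = x
  hb2 : basis 2 = y
  hb3 : basis 3 = z
  hb4 : basis 4 = y * x
  hb5 : basis 5 = z * x

namespace LambdaAlg

variable {k : Type} [Field k] {q : k} {Λ : Type} [Ring Λ] [Algebra k Λ]

/-- The element `ax + by + cz` of `Λ`. -/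
def w (D : LambdaAlg k q Λ) (a b c : k) : Λ := a • D.x + b • D.y + c • D.z

/-- The left ideal `U(a,b,c) = Λ(ax+by+cz) + Λ·yx + Λ·zx` of `Λ`. -/
def U (D : LambdaAlg k q Λ) (a b c : k) : Submodule Λ Λ :=
  Submodule.span Λ {D.w a b c, D.y * D.x, D.z * D.x}

/-- The left `Λ`-module `M(a,b,c) = Λ/U(a,b,c)`. -/
abbrev M (D : LambdaAlg k q Λ) (a b c : k) : Type := Λ ⧸ D.U a b c

/-- The right ideal `U′(a,b,c) = (ax+by+cz)Λ + yx·Λ + zx·Λ` of `Λ`,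
viewed as a `Λᵐᵒᵖ`-submodule of `Λ`. -/
def U' (D : LambdaAlg k q Λ) (a b c : k) : Submodule Λᵐᵒᵖ Λ :=
  Submodule.span Λᵐᵒᵖ {D.w a b c, D.y * D.x, D.z * D.x}

/-- The right `Λ`-module `M′(a,b,c) = Λ/U′(a,b,c)` (a module over `Λᵐᵒᵖ`). -/
abbrev M' (D : LambdaAlg k q Λ) (a b c : k) : Type := Λ ⧸ D.U' a b c

/-- The `k`-subspace `{m ∈ M : x·m = y·m = z·m = 0}` of a left `Λ`-module `M`;
since `x, y, z` generate `rad Λ` and every simple `Λ`-module is isomorphic to `k`,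
this is the socle of `M`. -/
def ann (D : LambdaAlg k q Λ) (M : Type) [AddCommGroup M] [Module k M] [Module Λ M]
    [IsScalarTower k Λ M] : Submodule k M where
  carrier := {m | D.x • m = 0 ∧ D.y • m = 0 ∧ D.z • m = 0}
  add_mem' := by
    rintro a b ⟨h1, h2, h3⟩ ⟨g1, g2, g3⟩
    simp [smul_add, h1, h2, h3, g1, g2, g3]
  zero_mem' := by simp
  smul_mem' := by
    rintro a m ⟨h1, h2, h3⟩
    refine ⟨?_, ?_, ?_⟩ <;> rw [smul_comm] <;> simp [h1, h2, h3]

/-- The submodule `(rad Λ)·M = x·M + y·M + z·M` of a left `Λ`-module `M`. -/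
def radM (D : LambdaAlg k q Λ) (M : Type) [AddCommGroup M] [Module Λ M] :
    Submodule Λ M :=
  Submodule.span Λ
    (Set.range (fun m : M => D.x • m) ∪ Set.range (fun m : M => D.y • m) ∪
      Set.range (fun m : M => D.z • m))

end LambdaAlg

/-- A module is indecomposable if it is nonzero and is not the direct sum of two
nonzero submodules. -/
def IsIndecomposable (R : Type) [Ring R] (M : Type) [AddCommGroup M] [Module R M] :
    Prop :=
  Nontrivial M ∧
    ∀ N₁ N₂ : Submodule R M, N₁ ⊓ N₂ = ⊥ → N₁ ⊔ N₂ = ⊤ → N₁ = ⊥ ∨ N₂ = ⊥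

/-- A module is torsionless if it admits an injective linear map into a finite free
module. -/
def IsTorsionless (R : Type) [Ring R] (M : Type) [AddCommGroup M] [Module R M] : Prop :=
  ∃ (n : ℕ) (f : M →ₗ[R] (Fin n → R)), Function.Injective f

/-- The canonical evaluation map `M → M** = Hom_{Λᵒᵖ}(Hom_Λ(M, Λ), Λ)`,
sending `m` to `f ↦ f m`. -/
def evalMap (Λ : Type) [Ring Λ] (M : Type) [AddCommGroup M] [Module Λ M] :
    M → ((M →ₗ[Λ] Λ) →ₗ[Λᵐᵒᵖ] Λ) := fun m =>
  { toFun := fun f => f m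
    map_add' := fun _ _ => rfl
    map_smul' := fun _ _ => rfl }

/-- The transformation `ω′(a,b,c) = (a, q⁻¹b, −((a+q⁻¹b)/a)·c)` on triples. -/
def omegaPrime {k : Type} [Field k] (q : k) (t : k × k × k) : k × k × k :=
  (t.1, q⁻¹ * t.2.1, -((t.1 + q⁻¹ * t.2.1) / t.1) * t.2.2)

namespace LambdaAlg

variable {k : Type} [Field k] {q : k} {Λ : Type} [Ring Λ] [Algebra k Λ]
variable (D : LambdaAlg k q Λ)

lemma p_xy : D.x * D.y = -(q • (D.y * D.x)) := by
  have := D.hxy; linear_combination (norm := noncomm_ring) this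
lemma p_xz : D.x * D.z = D.z * D.x := by
  have := D.hxz; linear_combination (norm := noncomm_ring) this
lemma p_zy : D.z * D.y = D.z * D.x := by
  have := D.hzy; linear_combination (norm := noncomm_ring) this
lemma p_x_yx : D.x * (D.y * D.x) = 0 := by
  rw [← mul_assoc, D.p_xy, neg_mul, smul_mul_assoc, mul_assoc, D.hxx, mul_zero,
    smul_zero, neg_zero]
lemma p_zx_x : (D.z * D.x) * D.x = 0 := by rw [mul_assoc, D.hxx, mul_zero]
lemma p_yx_x : (D.y * D.x) * D.x = 0 := by rw [mul_assoc, D.hxx, mul_zero]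
lemma p_x_zx : D.x * (D.z * D.x) = 0 := by
  rw [← mul_assoc, D.p_xz, D.p_zx_x]
lemma p_y_yx : D.y * (D.y * D.x) = 0 := by rw [← mul_assoc, D.hyy, zero_mul]
lemma p_y_zx : D.y * (D.z * D.x) = 0 := by rw [← mul_assoc, D.hyz, zero_mul]
lemma p_z_yx : D.z * (D.y * D.x) = 0 := by
  rw [← mul_assoc, D.p_zy, D.p_zx_x]
lemma p_z_zx : D.z * (D.z * D.x) = 0 := by rw [← mul_assoc, D.hzz, zero_mul]
lemma p_yx_y : (D.y * D.x) * D.y = 0 := by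
  rw [mul_assoc, D.p_xy, mul_neg, mul_smul_comm, D.p_y_yx, smul_zero, neg_zero]
lemma p_yx_z : (D.y * D.x) * D.z = 0 := by rw [mul_assoc, D.p_xz, D.p_y_zx]
lemma p_zx_y : (D.z * D.x) * D.y = 0 := by
  rw [mul_assoc, D.p_xy, mul_neg, mul_smul_comm, D.p_z_yx, smul_zero, neg_zero]
lemma p_zx_z : (D.z * D.x) * D.z = 0 := by rw [mul_assoc, D.p_xz, D.p_z_zx]
lemma p_yx_yx : (D.y * D.x) * (D.y * D.x) = 0 := by
  rw [← mul_assoc, D.p_yx_y, zero_mul]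
lemma p_yx_zx : (D.y * D.x) * (D.z * D.x) = 0 := by
  rw [← mul_assoc, D.p_yx_z, zero_mul]
lemma p_zx_yx : (D.z * D.x) * (D.y * D.x) = 0 := by
  rw [← mul_assoc, D.p_zx_y, zero_mul]
lemma p_zx_zx : (D.z * D.x) * (D.z * D.x) = 0 := by
  rw [← mul_assoc, D.p_zx_z, zero_mul]

lemma expand (u : Λ) : u = D.basis.repr u 0 • (1 : Λ) + D.basis.repr u 1 • D.x +
    D.basis.repr u 2 • D.y + D.basis.repr u 3 • D.z +
    D.basis.repr u 4 • (D.y * D.x) + D.basis.repr u 5 • (D.z * D.x) := by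
  have h := D.basis.sum_repr u
  rw [Fin.sum_univ_six] at h
  rw [D.hb0, D.hb1, D.hb2, D.hb3, D.hb4, D.hb5] at h
  exact h.symm

lemma sq_mem_soc (a b c d e : k) :
    (a • D.x + b • D.y + c • D.z + d • (D.y * D.x) + e • (D.z * D.x)) *
      (a • D.x + b • D.y + c • D.z + d • (D.y * D.x) + e • (D.z * D.x)) =
    (a * b - q * (a * b)) • (D.y * D.x) + (a * c + c * a + c * b) • (D.z * D.x) := by
  simp only [mul_add, add_mul, smul_mul_assoc, mul_smul_comm, D.hxx, D.hyy, D.hzz,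
    D.hyz, D.p_xy, D.p_xz, D.p_zy, D.p_x_yx, D.p_x_zx, D.p_y_yx, D.p_y_zx, D.p_z_yx,
    D.p_z_zx, D.p_yx_x, D.p_yx_y, D.p_yx_z, D.p_yx_yx, D.p_yx_zx, D.p_zx_x, D.p_zx_y,
    D.p_zx_z, D.p_zx_yx, D.p_zx_zx, smul_zero, smul_neg, smul_smul, zero_add, add_zero,
    smul_add]
  module

lemma cube_zero (a b c d e : k) :
    (a • D.x + b • D.y + c • D.z + d • (D.y * D.x) + e • (D.z * D.x)) *
    ((a • D.x + b • D.y + c • D.z + d • (D.y * D.x) + e • (D.z * D.x)) *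
     (a • D.x + b • D.y + c • D.z + d • (D.y * D.x) + e • (D.z * D.x))) = 0 := by
  rw [D.sq_mem_soc]
  simp only [mul_add, add_mul, smul_mul_assoc, mul_smul_comm, D.p_x_yx, D.p_x_zx,
    D.p_y_yx, D.p_y_zx, D.p_z_yx, D.p_z_zx, D.p_yx_yx, D.p_yx_zx, D.p_zx_yx, D.p_zx_zx,
    smul_zero, add_zero, zero_add]

lemma y_mul (u : Λ) (h0 : D.basis.repr u 0 = 0) :
    D.y * u = D.basis.repr u 1 • (D.y * D.x) := by
  conv_lhs => rw [D.expand u]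
  rw [h0]
  simp only [zero_smul, zero_add, mul_add, mul_smul_comm, D.hyy, D.hyz, D.p_y_yx,
    D.p_y_zx, smul_zero, add_zero]

lemma z_mul (u : Λ) (h0 : D.basis.repr u 0 = 0) :
    D.z * u = (D.basis.repr u 1 + D.basis.repr u 2) • (D.z * D.x) := by
  conv_lhs => rw [D.expand u]
  rw [h0]
  simp only [zero_smul, zero_add, mul_add, mul_smul_comm, D.hzz, D.p_zy, D.p_z_yx,
    D.p_z_zx, smul_zero, add_zero, add_smul]

lemma x_mul (u : Λ) (h0 : D.basis.repr u 0 = 0) :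
    D.x * u = (-(q * D.basis.repr u 2)) • (D.y * D.x) +
      D.basis.repr u 3 • (D.z * D.x) := by
  conv_lhs => rw [D.expand u]
  rw [h0]
  simp only [zero_smul, zero_add, mul_add, mul_smul_comm, D.hxx, D.p_xy, D.p_xz,
    D.p_x_yx, D.p_x_zx, smul_zero, add_zero, zero_add, smul_neg, smul_smul, neg_smul]
  rw [mul_comm]

lemma exists_left_inv (u : Λ) (ha : D.basis.repr u 0 ≠ 0) : ∃ v : Λ, v * u = 1 := by
  obtain ⟨a, m, ha', hm3, hu⟩ : ∃ (a : k) (m : Λ), a ≠ 0 ∧ m * (m * m) = 0 ∧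
      u = a • (1 : Λ) + m := by
    refine ⟨D.basis.repr u 0,
      D.basis.repr u 1 • D.x + D.basis.repr u 2 • D.y + D.basis.repr u 3 • D.z +
        D.basis.repr u 4 • (D.y * D.x) + D.basis.repr u 5 • (D.z * D.x),
      ha, D.cube_zero _ _ _ _ _, ?_⟩
    conv_lhs => rw [D.expand u]
    abel
  have hm3' : (m * m) * m = 0 := by rw [mul_assoc]; exact hm3
  refine ⟨a⁻¹ • (1 : Λ) - (a⁻¹ * a⁻¹) • m + (a⁻¹ * a⁻¹ * a⁻¹) • (m * m), ?_⟩
  rw [hu]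
  simp only [add_mul, sub_mul, mul_add, smul_mul_assoc, mul_smul_comm, one_mul, mul_one,
    smul_smul, hm3, hm3', smul_zero]
  match_scalars <;> (try field_simp) <;> ring
lemma coord0_eq_zero (U : Submodule Λ Λ) (hU : Module.finrank k ↥U = 3)
    (u : Λ) (hu : u ∈ U) : D.basis.repr u 0 = 0 := by
  by_contra ha
  obtain ⟨v, hv⟩ := D.exists_left_inv u ha
  have h1 : (1 : Λ) ∈ U := by rw [← hv, ← smul_eq_mul]; exact U.smul_mem v hu
  have htop : U.restrictScalars k = ⊤ := by
    rw [eq_top_iff]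
    intro w _
    have : w * 1 ∈ U := by rw [← smul_eq_mul]; exact U.smul_mem w h1
    simpa using this
  have h6 : Module.finrank k ↥U = 6 := by
    have : Module.finrank k ↥(U.restrictScalars k) = Module.finrank k Λ := by
      rw [htop]; exact finrank_top k Λ
    rw [show Module.finrank k ↥U = Module.finrank k ↥(U.restrictScalars k) from rfl, this,
      Module.finrank_eq_card_basis D.basis]
    simp
  rw [h6] at hU
  exact absurd hU (by norm_num)

lemma ksmul_mem (U : Submodule Λ Λ) (a : k) {v : Λ} (hv : v ∈ U) : a • v ∈ U := by
  rw [Algebra.smul_def, ← smul_eq_mul]; exact U.smul_mem _ hv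

lemma ksmul_cancel (U : Submodule Λ Λ) {a : k} {v : Λ} (ha : a ≠ 0)
    (hv : a • v ∈ U) : v ∈ U := by
  have := ksmul_mem U a⁻¹ hv
  rwa [smul_smul, inv_mul_cancel₀ ha, one_smul] at this

lemma mem_span3 {e1 e2 e3 v : Λ} (a b c : k) (hv : v = a • e1 + b • e2 + c • e3) :
    v ∈ Submodule.span k ({e1, e2, e3} : Set Λ) := by
  rw [hv]
  refine Submodule.add_mem _ (Submodule.add_mem _ ?_ ?_) ?_ <;>
    · exact Submodule.smul_mem _ _ (Submodule.subset_span (by simp))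

lemma span_eq_of_le (U : Submodule Λ Λ) (hU : Module.finrank k ↥U = 3) (e1 e2 e3 : Λ)
    (hle : ∀ u ∈ U, u ∈ Submodule.span k ({e1, e2, e3} : Set Λ)) :
    U.restrictScalars k = Submodule.span k ({e1, e2, e3} : Set Λ) := by
  haveI := FiniteDimensional.span_of_finite k (Set.toFinite ({e1, e2, e3} : Set Λ))
  refine Submodule.eq_of_le_of_finrank_le (fun u hu => hle u hu) ?_
  have h3 : Module.finrank k (Submodule.span k ({e1, e2, e3} : Set Λ)) ≤ 3 := by
    have h : ({e1, e2, e3} : Set Λ) = Set.range ![e1, e2, e3] := by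
      ext w; simp [Fin.exists_fin_succ, Matrix.cons_val_zero, Matrix.cons_val_one,
        or_comm, or_assoc, eq_comm]
      tauto
    rw [h]
    simpa [Set.finrank] using finrank_range_le_card (R := k) ![e1, e2, e3]
  exact h3.trans (le_of_eq hU.symm)

end LambdaAlg


/-- Every 3-dimensional left ideal of `Λ` contains `soc Λ`, i.e. contains `yx`
and `zx`. -/
theorem statement4 (k : Type) [Field k] (q : k) (hq : q ≠ 0)
    (Λ : Type) [Ring Λ] [Algebra k Λ] (D : LambdaAlg k q Λ)
    (U : Submodule Λ Λ) (hU : Module.finrank k ↥U = 3) :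
    D.y * D.x ∈ U ∧ D.z * D.x ∈ U := by
  have h0 : ∀ u ∈ U, D.basis.repr u 0 = 0 := fun u hu => D.coord0_eq_zero U hU u hu
  have hmul : ∀ (r v : Λ), v ∈ U → r * v ∈ U := fun r v hv => by
    rw [← smul_eq_mul]; exact U.smul_mem r hv
  by_cases hc1 : ∃ u ∈ U, D.basis.repr u 1 ≠ 0
  · obtain ⟨u, hu, h1⟩ := hc1
    have hyx : D.y * D.x ∈ U := by
      have h := hmul D.y u hu
      rw [D.y_mul u (h0 u hu)] at h
      exact LambdaAlg.ksmul_cancel U h1 h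
    refine ⟨hyx, ?_⟩
    by_cases hc2 : ∃ v ∈ U, D.basis.repr v 1 + D.basis.repr v 2 ≠ 0
    · obtain ⟨v, hv, h2⟩ := hc2
      have h := hmul D.z v hv
      rw [D.z_mul v (h0 v hv)] at h
      exact LambdaAlg.ksmul_cancel U h2 h
    · push_neg at hc2
      by_cases hc3 : ∃ v ∈ U, D.basis.repr v 3 ≠ 0
      · obtain ⟨v, hv, h3⟩ := hc3
        have hxv := hmul D.x v hv
        rw [D.x_mul v (h0 v hv)] at hxv
        have h : D.basis.repr v 3 • (D.z * D.x) ∈ U := by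
          have := U.sub_mem hxv (LambdaAlg.ksmul_mem U (-(q * D.basis.repr v 2)) hyx)
          simpa using this
        exact LambdaAlg.ksmul_cancel U h3 h
      · push_neg at hc3
        have hle : ∀ u' ∈ U, u' ∈ Submodule.span k
            ({D.x - D.y, D.y * D.x, D.z * D.x} : Set Λ) := by
          intro u' hu'
          have e2 : D.basis.repr u' 2 = -(D.basis.repr u' 1) := by
            have := hc2 u' hu'; linear_combination this
          refine LambdaAlg.mem_span3 (D.basis.repr u' 1) (D.basis.repr u' 4)
            (D.basis.repr u' 5) ?_
          conv_lhs => rw [D.expand u']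
          rw [h0 u' hu', hc3 u' hu', e2]
          module
        have hsp := LambdaAlg.span_eq_of_le U hU _ _ _ hle
        have : D.z * D.x ∈ U.restrictScalars k := by
          rw [hsp]; exact Submodule.subset_span (by simp)
        exact this
  · push_neg at hc1
    by_cases hc2 : ∃ u ∈ U, D.basis.repr u 2 ≠ 0
    · obtain ⟨u, hu, h2⟩ := hc2
      have hzx : D.z * D.x ∈ U := by
        have h := hmul D.z u hu
        rw [D.z_mul u (h0 u hu)] at h
        refine LambdaAlg.ksmul_cancel U ?_ h
        rw [hc1 u hu, zero_add]; exact h2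
      have hyx : D.y * D.x ∈ U := by
        have hxu := hmul D.x u hu
        rw [D.x_mul u (h0 u hu)] at hxu
        have h : (-(q * D.basis.repr u 2)) • (D.y * D.x) ∈ U := by
          have := U.sub_mem hxu (LambdaAlg.ksmul_mem U (D.basis.repr u 3) hzx)
          simpa using this
        refine LambdaAlg.ksmul_cancel U ?_ h
        simp [hq, h2]
      exact ⟨hyx, hzx⟩
    · push_neg at hc2
      have hle : ∀ u' ∈ U, u' ∈ Submodule.span k
          ({D.z, D.y * D.x, D.z * D.x} : Set Λ) := by
        intro u' hu'
        refine LambdaAlg.mem_span3 (D.basis.repr u' 3) (D.basis.repr u' 4)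
          (D.basis.repr u' 5) ?_
        conv_lhs => rw [D.expand u']
        rw [h0 u' hu', hc1 u' hu', hc2 u' hu']
        module
      have hsp := LambdaAlg.span_eq_of_le U hU _ _ _ hle
      constructor
      · have : D.y * D.x ∈ U.restrictScalars k := by
          rw [hsp]; exact Submodule.subset_span (by simp)
        exact this
      · have : D.z * D.x ∈ U.restrictScalars k := by
          rw [hsp]; exact Submodule.subset_span (by simp)
        exact this
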